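/- Let (X,d) be a complete metric space, φ : X → ℝ lower semicontinuous and bounded below, and let η : [0,∞) → [0,∞) be nondecreasing with η(0) = 0 and η(t) > 0 for all t > 0 such that η(t)/t is bounded below by a positive constant on (0, δ) for some δ > 0. Then any T : X → X with η(d(x,Tx)) ≤ φ(x) − φ(Tx) for all x ∈ X has a fixed point. -/
import Mathlib


theorem kirk_problem_partial_answer {X : Type*} [MetricSpace X] [CompleteSpace X] [Nonempty X]
    (φ : X → ℝ) (hlsc : LowerSemicontinuous φ) (hbd : BddBelow (Set.range φ))
    (η : ℝ → ℝ) (hnn : ∀ t, 0 ≤ t → 0 ≤ η t)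
    (hmono : ∀ s t : ℝ, 0 ≤ s → s ≤ t → η s ≤ η t)
    (hη0 : η 0 = 0) (hpos : ∀ t : ℝ, 0 < t → 0 < η t)
    (hgrow : ∃ c > (0 : ℝ), ∃ δ > (0 : ℝ), ∀ t : ℝ, 0 < t → t < δ → c ≤ η t / t)
    (T : X → X) (hT : ∀ x, η (dist x (T x)) ≤ φ x - φ (T x)) :
    ∃ x, T x = x := by
  classical
  obtain ⟨c, hc, δ, hδ, hcδ⟩ := hgrow
  set b : ℝ := δ / 2 with hbdef
  have hb0 : 0 < b := by positivity
  have hbδ : b < δ := by rw [hbdef]; linarith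
  -- the truncated distance
  set ρ : X → X → ℝ := fun x y => min (dist x y) b with hρdef
  have ρnn : ∀ x y : X, 0 ≤ ρ x y := fun x y => le_min dist_nonneg hb0.le
  have ρself : ∀ x : X, ρ x x = 0 := by
    intro x; show min (dist x x) b = 0; rw [dist_self]; exact min_eq_left hb0.le
  have ρle : ∀ x y : X, ρ x y ≤ dist x y := fun x y => min_le_left _ _
  have ρtri : ∀ x y z : X, ρ x z ≤ ρ x y + ρ y z := by
    intro x y z
    rcases le_or_gt b (dist x y) with h | h
    · calc ρ x z ≤ b := min_le_right _ _
        _ = ρ x y := (min_eq_right h).symm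
        _ ≤ ρ x y + ρ y z := le_add_of_nonneg_right (ρnn y z)
    · rcases le_or_gt b (dist y z) with h' | h'
      · calc ρ x z ≤ b := min_le_right _ _
          _ = ρ y z := (min_eq_right h').symm
          _ ≤ ρ x y + ρ y z := le_add_of_nonneg_left (ρnn x y)
      · calc ρ x z ≤ dist x z := min_le_left _ _
          _ ≤ dist x y + dist y z := dist_triangle x y z
          _ = ρ x y + ρ y z := by
              show _ = min (dist x y) b + min (dist y z) b
              rw [min_eq_left h.le, min_eq_left h'.le]
  have ρeq : ∀ x y : X, ρ x y < b → ρ x y = dist x y := by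
    intro x y h
    rcases le_or_gt (dist x y) b with h' | h'
    · exact min_eq_left h'
    · exact absurd (min_eq_right h'.le ▸ h) (lt_irrefl b)
  -- key inequality : c * ρ x (T x) ≤ φ x - φ (T x)
  have key : ∀ x : X, c * ρ x (T x) ≤ φ x - φ (T x) := by
    intro x
    have h1 := hT x
    have ht0 : (0:ℝ) ≤ dist x (T x) := dist_nonneg
    show c * min (dist x (T x)) b ≤ φ x - φ (T x)
    rcases eq_or_lt_of_le ht0 with h0 | h0
    · have hm : min (dist x (T x)) b = 0 := by rw [← h0]; exact min_eq_left hb0.le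
      rw [hm, mul_zero]
      calc (0:ℝ) = η 0 := hη0.symm
        _ = η (dist x (T x)) := by rw [← h0]
        _ ≤ _ := h1
    · rcases lt_or_ge (dist x (T x)) δ with hlt | hge
      · have h2 : c ≤ η (dist x (T x)) / dist x (T x) := hcδ _ h0 hlt
        rw [le_div_iff₀ h0] at h2
        have h3 : min (dist x (T x)) b ≤ dist x (T x) := min_le_left _ _
        nlinarith [hc.le]
      · have h2 : c ≤ η b / b := hcδ b hb0 hbδ
        rw [le_div_iff₀ hb0] at h2
        have h4 : η b ≤ η (dist x (T x)) := hmono _ _ hb0.le (le_trans hbδ.le hge)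
        have hm : min (dist x (T x)) b = b := min_eq_right (le_trans hbδ.le hge)
        rw [hm]; linarith
  -- the Caristi order sets
  set S : X → Set X := fun x => {y | c * ρ x y + φ y ≤ φ x} with hSdef
  have hself : ∀ x : X, x ∈ S x := by
    intro x
    show c * ρ x x + φ x ≤ φ x
    rw [ρself, mul_zero, zero_add]
  have hTmem : ∀ x : X, T x ∈ S x := by
    intro x
    show c * ρ x (T x) + φ (T x) ≤ φ x
    have := key x; linarith
  have Strans : ∀ x y z : X, y ∈ S x → z ∈ S y → z ∈ S x := by
    intro x y z h1 h2
    have h1' : c * ρ x y + φ y ≤ φ x := h1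
    have h2' : c * ρ y z + φ z ≤ φ y := h2
    show c * ρ x z + φ z ≤ φ x
    have htri := ρtri x y z
    nlinarith [hc.le]
  obtain ⟨m, hm⟩ := hbd
  have hmφ : ∀ x : X, m ≤ φ x := fun x => hm ⟨x, rfl⟩
  have hBdd : ∀ x : X, BddBelow (φ '' S x) := by
    intro x
    exact ⟨m, by rintro v ⟨y, _, rfl⟩; exact hmφ y⟩
  have hNe : ∀ x : X, (φ '' S x).Nonempty := fun x => ⟨φ x, x, hself x, rfl⟩
  have hInfle : ∀ x : X, ∀ y ∈ S x, sInf (φ '' S x) ≤ φ y :=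
    fun x y hy => csInf_le (hBdd x) ⟨y, hy, rfl⟩
  -- choose nearly-minimizing successors
  have hstep : ∀ (x : X) (ε : ℝ), 0 < ε → ∃ y, y ∈ S x ∧ φ y < sInf (φ '' S x) + ε := by
    intro x ε hε
    have hlt : sInf (φ '' S x) < sInf (φ '' S x) + ε := by linarith
    obtain ⟨v, hv, hvlt⟩ := exists_lt_of_csInf_lt (hNe x) hlt
    obtain ⟨y, hy, rfl⟩ := hv
    exact ⟨y, hy, hvlt⟩
  choose next hnext1 hnext2 using hstep
  have half_pos : ∀ k : ℕ, (0:ℝ) < (1/2)^k := fun k => pow_pos (by norm_num) k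
  obtain ⟨x₀⟩ := ‹Nonempty X›
  set u : ℕ → X := fun n => Nat.rec x₀ (fun k x => next x ((1/2)^k) (half_pos k)) n
    with hudef
  have huS : ∀ n : ℕ, u (n+1) ∈ S (u n) := fun n => hnext1 (u n) ((1/2)^n) (half_pos n)
  have huI : ∀ n : ℕ, φ (u (n+1)) < sInf (φ '' S (u n)) + (1/2)^n :=
    fun n => hnext2 (u n) ((1/2)^n) (half_pos n)
  have hmem : ∀ n m : ℕ, n ≤ m → u m ∈ S (u n) := by
    intro n m hnm
    induction m, hnm using Nat.le_induction with
    | base => exact hself (u n)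
    | succ k hk ih => exact Strans _ _ _ ih (huS k)
  have hsmall : ∀ n : ℕ, ∀ y ∈ S (u (n+1)), c * ρ (u (n+1)) y ≤ (1/2)^n := by
    intro n y hy
    have hy' : y ∈ S (u n) := Strans _ _ _ (huS n) hy
    have h1 : sInf (φ '' S (u n)) ≤ φ y := hInfle _ _ hy'
    have h2 : c * ρ (u (n+1)) y + φ y ≤ φ (u (n+1)) := hy
    have h3 := huI n
    linarith
  -- Cauchy
  have hcauchy : CauchySeq u := by
    rw [Metric.cauchySeq_iff']
    intro ε hε
    obtain ⟨N, hN⟩ : ∃ N : ℕ, (1/2:ℝ)^N < c * min ε b := by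
      refine exists_pow_lt_of_lt_one ?_ (by norm_num)
      exact mul_pos hc (lt_min hε hb0)
    refine ⟨N + 1, fun n hn => ?_⟩
    have h1 : c * ρ (u (N+1)) (u n) ≤ (1/2)^N := hsmall N (u n) (hmem (N+1) n hn)
    have h2 : ρ (u (N+1)) (u n) < min ε b := by
      have := lt_of_le_of_lt h1 hN
      exact lt_of_mul_lt_mul_left this hc.le
    have h3 : ρ (u (N+1)) (u n) = dist (u (N+1)) (u n) :=
      ρeq _ _ (lt_of_lt_of_le h2 (min_le_right _ _))
    rw [dist_comm, ← h3]
    exact lt_of_lt_of_le h2 (min_le_left _ _)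
  obtain ⟨z, hz⟩ := cauchySeq_tendsto_of_complete hcauchy
  -- the limit is in every S (u n)
  have hmemlim : ∀ n : ℕ, z ∈ S (u n) := by
    intro n
    show c * ρ (u n) z + φ z ≤ φ (u n)
    refine le_of_forall_pos_le_add ?_
    intro ε hε
    set ε₁ : ℝ := ε / (2 * (c + 1)) with hε₁def
    have hε₁ : 0 < ε₁ := by positivity
    have hE : c * ε₁ ≤ ε / 2 := by
      rw [hε₁def, mul_div_assoc', div_le_div_iff₀ (by positivity) two_pos]
      nlinarith [hε.le, hc.le]
    have hev1 : ∀ᶠ k : ℕ in Filter.atTop, φ z - ε / 2 < φ (u k) :=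
      hz.eventually (hlsc z (φ z - ε / 2) (by linarith))
    have hev2 : ∀ᶠ k : ℕ in Filter.atTop, dist (u k) z < ε₁ :=
      hz.eventually (Metric.ball_mem_nhds z hε₁)
    have hev3 : ∀ᶠ k : ℕ in Filter.atTop, n ≤ k := Filter.eventually_ge_atTop n
    obtain ⟨k, hk1, hk2, hk3⟩ := (hev1.and (hev2.and hev3)).exists
    have hA : c * ρ (u n) (u k) + φ (u k) ≤ φ (u n) := hmem n k hk3
    have hB : ρ (u n) z ≤ ρ (u n) (u k) + dist (u k) z :=
      le_trans (ρtri (u n) (u k) z) (by have := ρle (u k) z; linarith)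
    have hB' : c * ρ (u n) z ≤ c * (ρ (u n) (u k) + dist (u k) z) :=
      mul_le_mul_of_nonneg_left hB hc.le
    have hD : c * dist (u k) z ≤ c * ε₁ := mul_le_mul_of_nonneg_left hk2.le hc.le
    nlinarith
  -- conclude
  have hfix : dist z (T z) = 0 := by
    by_contra hne
    have hd : 0 < dist z (T z) := lt_of_le_of_ne dist_nonneg (Ne.symm hne)
    have hρ0 : 0 < ρ z (T z) := lt_min hd hb0
    set r : ℝ := ρ z (T z) with hrdef
    obtain ⟨N₁, hN₁⟩ := (Metric.tendsto_atTop.mp hz) (r / 2) (by positivity)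
    obtain ⟨N₂, hN₂⟩ : ∃ N : ℕ, (1/2:ℝ)^N < c * (r / 2) :=
      exists_pow_lt_of_lt_one (by positivity) (by norm_num)
    set n : ℕ := max N₁ N₂ with hndef
    have hn1 : dist (u (n+1)) z < r / 2 :=
      hN₁ (n+1) (le_trans (le_max_left N₁ N₂) (Nat.le_succ_of_le le_rfl))
    have hTz : T z ∈ S (u (n+1)) := Strans _ _ _ (hmemlim (n+1)) (hTmem z)
    have h1 : c * ρ (u (n+1)) (T z) ≤ (1/2)^n := hsmall n (T z) hTz
    have h2 : (1/2:ℝ)^n ≤ (1/2)^N₂ :=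
      pow_le_pow_of_le_one (by norm_num) (by norm_num) (le_max_right N₁ N₂)
    have h3 : c * ρ (u (n+1)) (T z) < c * (r / 2) :=
      lt_of_le_of_lt (le_trans h1 h2) hN₂
    have h4 : ρ (u (n+1)) (T z) < r / 2 := lt_of_mul_lt_mul_left h3 hc.le
    have h5 : r ≤ ρ z (u (n+1)) + ρ (u (n+1)) (T z) := ρtri z (u (n+1)) (T z)
    have h6 : ρ z (u (n+1)) ≤ dist z (u (n+1)) := ρle _ _
    rw [dist_comm] at hn1
    linarith
  exact ⟨z, (eq_of_dist_eq_zero hfix).symm⟩
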